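/- Let $s,t \in \mathbb{R}_{\ge 0}^4$ satisfy $s_1 t_2 t_3 s_4 = t_1 s_2 s_3 t_4$. Then $A(s,t) := \inf_{r>0} \left[\sqrt{(s_1 r^{-1}+t_4 r)(s_4 r^{-1}+t_1 r)} + \sqrt{(s_2 r^{-1}+t_3 r)(s_3 r^{-1}+t_2 r)}\right] = \sum_{i=1}^4 \sqrt{s_i t_i}$. -/

import Mathlib

open Real

noncomputable def Afun (s t : Fin 4 → ℝ) : ℝ :=
  sInf {x : ℝ | ∃ r : ℝ, 0 < r ∧
    x = Real.sqrt ((s 0 / r + t 3 * r) * (s 3 / r + t 0 * r)) +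
        Real.sqrt ((s 1 / r + t 2 * r) * (s 2 / r + t 1 * r))}

/-- cross-product identity for square roots -/
lemma sqrt_cross (a b c d : ℝ) (ha : 0 ≤ a) (hb : 0 ≤ b) (hc : 0 ≤ c) (hd : 0 ≤ d) :
    Real.sqrt (a * d) * Real.sqrt (b * c) = Real.sqrt (a * c) * Real.sqrt (b * d) := by
  rw [← Real.sqrt_mul (mul_nonneg ha hd), ← Real.sqrt_mul (mul_nonneg ha hc)]
  ring_nf

/-- general Cauchy–Schwarz lower bound -/
lemma gen_lb (a b c d : ℝ) (ha : 0 ≤ a) (hb : 0 ≤ b) (hc : 0 ≤ c) (hd : 0 ≤ d) :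
    Real.sqrt (a * d) + Real.sqrt (b * c) ≤ Real.sqrt ((a + b) * (c + d)) := by
  have h1 := Real.sq_sqrt (mul_nonneg ha hd)
  have h2 := Real.sq_sqrt (mul_nonneg hb hc)
  have h3 := Real.sq_sqrt (mul_nonneg ha hc)
  have h4 := Real.sq_sqrt (mul_nonneg hb hd)
  have hx := sqrt_cross a b c d ha hb hc hd
  have hX : 0 ≤ Real.sqrt (a * d) + Real.sqrt (b * c) :=
    add_nonneg (Real.sqrt_nonneg _) (Real.sqrt_nonneg _)
  have hsq : (Real.sqrt (a * d) + Real.sqrt (b * c)) ^ 2 ≤ (a + b) * (c + d) := by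
    nlinarith [sq_nonneg (Real.sqrt (a * c) - Real.sqrt (b * d))]
  calc Real.sqrt (a * d) + Real.sqrt (b * c)
      = Real.sqrt ((Real.sqrt (a * d) + Real.sqrt (b * c)) ^ 2) := (Real.sqrt_sq hX).symm
    _ ≤ Real.sqrt ((a + b) * (c + d)) := Real.sqrt_le_sqrt hsq

/-- general upper bound with error term -/
lemma gen_ub (a b c d : ℝ) (ha : 0 ≤ a) (hb : 0 ≤ b) (hc : 0 ≤ c) (hd : 0 ≤ d) :
    Real.sqrt ((a + b) * (c + d)) ≤
      Real.sqrt (a * d) + Real.sqrt (b * c) + |Real.sqrt (a * c) - Real.sqrt (b * d)| := by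
  have h1 := Real.sq_sqrt (mul_nonneg ha hd)
  have h2 := Real.sq_sqrt (mul_nonneg hb hc)
  have h3 := Real.sq_sqrt (mul_nonneg ha hc)
  have h4 := Real.sq_sqrt (mul_nonneg hb hd)
  have hx := sqrt_cross a b c d ha hb hc hd
  have hX : 0 ≤ Real.sqrt (a * d) + Real.sqrt (b * c) :=
    add_nonneg (Real.sqrt_nonneg _) (Real.sqrt_nonneg _)
  set Y := Real.sqrt (a * c) - Real.sqrt (b * d) with hY
  have hXY : 0 ≤ Real.sqrt (a * d) + Real.sqrt (b * c) + |Y| :=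
    add_nonneg hX (abs_nonneg _)
  have heq : (a + b) * (c + d) = (Real.sqrt (a * d) + Real.sqrt (b * c)) ^ 2 + Y ^ 2 := by
    linear_combination -h1 - h2 - h3 - h4 - 2 * hx
  have hsq : (a + b) * (c + d) ≤ (Real.sqrt (a * d) + Real.sqrt (b * c) + |Y|) ^ 2 := by
    nlinarith [sq_abs Y, abs_nonneg Y, mul_nonneg hX (abs_nonneg Y), heq]
  calc Real.sqrt ((a + b) * (c + d))
      ≤ Real.sqrt ((Real.sqrt (a * d) + Real.sqrt (b * c) + |Y|) ^ 2) :=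
        Real.sqrt_le_sqrt hsq
    _ = _ := Real.sqrt_sq hXY

/-- specialized lower bound -/
lemma spec_lb (p u q v r : ℝ) (hp : 0 ≤ p) (hu : 0 ≤ u) (hq : 0 ≤ q) (hv : 0 ≤ v)
    (hr : 0 < r) :
    Real.sqrt (p * q) + Real.sqrt (u * v) ≤ Real.sqrt ((p / r + v * r) * (u / r + q * r)) := by
  have h := gen_lb (p / r) (v * r) (u / r) (q * r)
    (div_nonneg hp hr.le) (mul_nonneg hv hr.le) (div_nonneg hu hr.le) (mul_nonneg hq hr.le)
  have e1 : (p / r) * (q * r) = p * q := by field_simp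
  have e2 : (v * r) * (u / r) = u * v := by field_simp
  rwa [e1, e2] at h

/-- specialized upper bound -/
lemma spec_ub (p u q v r : ℝ) (hp : 0 ≤ p) (hu : 0 ≤ u) (hq : 0 ≤ q) (hv : 0 ≤ v)
    (hr : 0 < r) :
    Real.sqrt ((p / r + v * r) * (u / r + q * r)) ≤
      Real.sqrt (p * q) + Real.sqrt (u * v) +
        |Real.sqrt (p * u) / r - Real.sqrt (v * q) * r| := by
  have h := gen_ub (p / r) (v * r) (u / r) (q * r)
    (div_nonneg hp hr.le) (mul_nonneg hv hr.le) (div_nonneg hu hr.le) (mul_nonneg hq hr.le)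
  have e1 : (p / r) * (q * r) = p * q := by field_simp
  have e2 : (v * r) * (u / r) = u * v := by field_simp
  have e3 : Real.sqrt ((p / r) * (u / r)) = Real.sqrt (p * u) / r := by
    rw [show (p / r) * (u / r) = (p * u) / r ^ 2 by ring, Real.sqrt_div (mul_nonneg hp hu),
      Real.sqrt_sq hr.le]
  have e4 : Real.sqrt ((v * r) * (q * r)) = Real.sqrt (v * q) * r := by
    rw [show (v * r) * (q * r) = (v * q) * r ^ 2 by ring,
      Real.sqrt_mul (mul_nonneg hv hq), Real.sqrt_sq hr.le]
  rwa [e1, e2, e3, e4] at h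

/-- key existence lemma -/
lemma key_ex (a b a' b' : ℝ) (ha : 0 ≤ a) (hb : 0 ≤ b) (ha' : 0 ≤ a') (hb' : 0 ≤ b')
    (h : a * b' = a' * b) (ε : ℝ) (hε : 0 < ε) :
    ∃ r : ℝ, 0 < r ∧ |a / r - b * r| + |a' / r - b' * r| < ε := by
  by_cases hab : 0 < a ∧ 0 < b
  · obtain ⟨ha0, hb0⟩ := hab
    refine ⟨Real.sqrt (a / b), Real.sqrt_pos.mpr (div_pos ha0 hb0), ?_⟩
    set r := Real.sqrt (a / b) with hrdef
    have hr : 0 < r := Real.sqrt_pos.mpr (div_pos ha0 hb0)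
    have hr2 : r ^ 2 = a / b := Real.sq_sqrt (div_nonneg ha hb0.le)
    have e1 : a / r - b * r = 0 := by
      have : b * r ^ 2 = a := by rw [hr2]; field_simp
      field_simp
      nlinarith [this]
    have e2 : a' / r - b' * r = 0 := by
      have : b' * r ^ 2 = a' := by
        rw [hr2]
        field_simp
        nlinarith [h]
      field_simp
      nlinarith [this]
    rw [e1, e2]
    simpa using hε
  · by_cases hab' : 0 < a' ∧ 0 < b'
    · obtain ⟨ha0, hb0⟩ := hab'
      refine ⟨Real.sqrt (a' / b'), Real.sqrt_pos.mpr (div_pos ha0 hb0), ?_⟩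
      set r := Real.sqrt (a' / b') with hrdef
      have hr : 0 < r := Real.sqrt_pos.mpr (div_pos ha0 hb0)
      have hr2 : r ^ 2 = a' / b' := Real.sq_sqrt (div_nonneg ha' hb0.le)
      have e1 : a' / r - b' * r = 0 := by
        have : b' * r ^ 2 = a' := by rw [hr2]; field_simp
        field_simp
        nlinarith [this]
      have e2 : a / r - b * r = 0 := by
        have : b * r ^ 2 = a := by
          rw [hr2]
          field_simp
          nlinarith [h]
        field_simp
        nlinarith [this]
      rw [e1, e2]
      simpa using hε
    · -- in remaining cases, b = 0 ∧ b' = 0  or  a = 0 ∧ a' = 0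
      have hA : a = 0 ∨ b = 0 := by
        by_contra hcon
        push_neg at hcon
        exact hab ⟨ha.lt_of_ne (Ne.symm hcon.1), hb.lt_of_ne (Ne.symm hcon.2)⟩
      have hA' : a' = 0 ∨ b' = 0 := by
        by_contra hcon
        push_neg at hcon
        exact hab' ⟨ha'.lt_of_ne (Ne.symm hcon.1), hb'.lt_of_ne (Ne.symm hcon.2)⟩
      by_cases hbb : b = 0 ∧ b' = 0
      · refine ⟨(a + a') / ε + 1, ?_, ?_⟩
        · positivity
        · obtain ⟨hb1, hb2⟩ := hbb
          set r := (a + a') / ε + 1 with hrdef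
          have hr : 0 < r := by positivity
          have hεr : ε * r = (a + a') + ε := by
            rw [hrdef]; field_simp
          have h1 : a + a' < ε * r := by rw [hεr]; linarith
          rw [hb1, hb2]
          simp only [zero_mul, sub_zero]
          rw [abs_of_nonneg (div_nonneg ha hr.le), abs_of_nonneg (div_nonneg ha' hr.le)]
          rw [← add_div, div_lt_iff₀ hr]
          linarith [h1]
      · -- then a = 0 ∧ a' = 0 (otherwise contradiction)
        have haa : a = 0 ∧ a' = 0 := by
          rcases hA with h1 | h1 <;> rcases hA' with h2 | h2
          · exact ⟨h1, h2⟩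
          · constructor
            · exact h1
            · -- a = 0, b' = 0; a' * b = a * b' = 0
              by_contra hcon
              have hbpos : b = 0 := by
                by_contra hbc
                have : a' * b ≠ 0 := mul_ne_zero hcon hbc
                rw [← h, h1, h2] at this
                simp at this
              exact hbb ⟨hbpos, h2⟩
          · constructor
            · by_contra hcon
              have hbpos : b' = 0 := by
                by_contra hbc
                have : a * b' ≠ 0 := mul_ne_zero hcon hbc
                rw [h, h2] at this
                simp at this
              exact hbb ⟨h1, hbpos⟩
            · exact h2
          · exact absurd ⟨h1, h2⟩ hbb
        obtain ⟨ha1, ha2⟩ := haa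
        refine ⟨ε / (b + b' + 1), by positivity, ?_⟩
        set r := ε / (b + b' + 1) with hrdef
        have hr : 0 < r := by positivity
        rw [ha1, ha2]
        simp only [zero_div, zero_sub, abs_neg]
        rw [abs_of_nonneg (mul_nonneg hb hr.le), abs_of_nonneg (mul_nonneg hb' hr.le)]
        have h0 : (0:ℝ) < b + b' + 1 := by positivity
        have heq : (b + b') * r = ε * ((b + b') / (b + b' + 1)) := by
          rw [hrdef]; ring
        have hlt1 : (b + b') / (b + b' + 1) < 1 := by
          rw [div_lt_one h0]; linarith
        have : (b + b') * r < ε := by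
          rw [heq]
          nlinarith [hlt1, hε]
        nlinarith [this]

theorem stmt_1 (s t : Fin 4 → ℝ) (hs : ∀ i, 0 ≤ s i) (ht : ∀ i, 0 ≤ t i)
    (h : s 0 * t 1 * t 2 * s 3 = t 0 * s 1 * s 2 * t 3) :
    Afun s t = ∑ i : Fin 4, Real.sqrt (s i * t i) := by
  set S := {x : ℝ | ∃ r : ℝ, 0 < r ∧
    x = Real.sqrt ((s 0 / r + t 3 * r) * (s 3 / r + t 0 * r)) +
        Real.sqrt ((s 1 / r + t 2 * r) * (s 2 / r + t 1 * r))} with hSdef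
  have hsum : ∑ i : Fin 4, Real.sqrt (s i * t i) =
      Real.sqrt (s 0 * t 0) + Real.sqrt (s 1 * t 1) + Real.sqrt (s 2 * t 2) +
        Real.sqrt (s 3 * t 3) := by
    rw [Fin.sum_univ_four]
  have hne : S.Nonempty := by
    exact ⟨_, 1, one_pos, rfl⟩
  have hlb : ∀ x ∈ S, ∑ i : Fin 4, Real.sqrt (s i * t i) ≤ x := by
    rintro x ⟨r, hr, rfl⟩
    have h1 := spec_lb (s 0) (s 3) (t 0) (t 3) r (hs 0) (hs 3) (ht 0) (ht 3) hr
    have h2 := spec_lb (s 1) (s 2) (t 1) (t 2) r (hs 1) (hs 2) (ht 1) (ht 2) hr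
    rw [hsum]
    linarith
  have hbdd : BddBelow S := ⟨_, hlb⟩
  apply le_antisymm
  · rw [Afun, ← hSdef, Real.sInf_le_iff hbdd hne]
    intro ε hε
    -- a = √(s0 s3), b = √(t0 t3), a' = √(s1 s2), b' = √(t1 t2)
    obtain ⟨r, hr, hkey⟩ := key_ex (Real.sqrt (s 0 * s 3)) (Real.sqrt (t 3 * t 0))
      (Real.sqrt (s 1 * s 2)) (Real.sqrt (t 2 * t 1))
      (Real.sqrt_nonneg _) (Real.sqrt_nonneg _) (Real.sqrt_nonneg _) (Real.sqrt_nonneg _)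
      (by
        rw [← Real.sqrt_mul (mul_nonneg (hs 0) (hs 3)),
          ← Real.sqrt_mul (mul_nonneg (hs 1) (hs 2))]
        congr 1
        linarith [h]) ε hε
    refine ⟨_, ⟨r, hr, rfl⟩, ?_⟩
    have h1 := spec_ub (s 0) (s 3) (t 0) (t 3) r (hs 0) (hs 3) (ht 0) (ht 3) hr
    have h2 := spec_ub (s 1) (s 2) (t 1) (t 2) r (hs 1) (hs 2) (ht 1) (ht 2) hr
    rw [hsum]
    linarith
  · rw [Afun, ← hSdef]
    exact le_csInf hne hlb
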